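/- Let G⃗ be an oriented graph admitting a degree-preserving out-neighbourhood bijective homomorphism ψ to a strongly connected oriented graph H⃗. Then all fibres of ψ have the same size: |ψ⁻¹(u)| = |ψ⁻¹(v)| for all vertices u, v of H⃗. -/

import Mathlib

open SimpleGraph

/-- Out-neighbourhood bijective homomorphism between oriented graphs given by
their arc relations. -/
def IsOBH {V W : Type*} (A : V → V → Prop) (B : W → W → Prop) (psi : V → W) : Prop :=
  (∀ ⦃u v⦄, A u v → B (psi u) (psi v)) ∧
    ∀ v, Set.BijOn psi {x | A v x} {y | B (psi v) y}

theorem card_setOf_eq' {α : Type*} [Fintype α] (p : α → Prop) [DecidablePred p] :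
    Nat.card {x | p x} = (Finset.univ.filter p).card := by
  simp [Nat.card_eq_fintype_card, Fintype.card_subtype]

theorem stmt14 {V W : Type*} [Fintype V] [Fintype W]
    (A : V → V → Prop) (B : W → W → Prop)
    (hA : ∀ u v, A u v → ¬ A v u) (hB : ∀ u v, B u v → ¬ B v u)
    (hsc : ∀ u v : W, Relation.ReflTransGen B u v)
    (psi : V → W) (hpsi : IsOBH A B psi)
    (hdeg : ∀ v : V,
      Nat.card {u | A v u ∨ A u v} = Nat.card {w | B (psi v) w ∨ B w (psi v)}) :
    ∀ u v : W, Nat.card (psi ⁻¹' {u}) = Nat.card (psi ⁻¹' {v}) := by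
  classical
  intro u v
  set F : W → Finset V := fun w => Finset.univ.filter (fun x => psi x = w) with hF
  have hfib : ∀ w, Nat.card (psi ⁻¹' {w}) = (F w).card := by
    intro w
    have : psi ⁻¹' {w} = {x | psi x = w} := by ext x; simp
    rw [this, card_setOf_eq']
  -- exactly one out-neighbour in each target fibre
  have out1 : ∀ (x : V) (w : W), B (psi x) w →
      (Finset.univ.filter (fun y => A x y ∧ psi y = w)).card = 1 := by
    intro x w hbw
    obtain ⟨y0, hy0, hpy0⟩ := (hpsi.2 x).surjOn hbw
    rw [Finset.card_eq_one]
    refine ⟨y0, ?_⟩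
    ext z
    simp only [Finset.mem_filter, Finset.mem_univ, true_and, Finset.mem_singleton]
    constructor
    · rintro ⟨haz, hpz⟩
      exact (hpsi.2 x).injOn haz hy0 (by rw [hpz, hpy0])
    · rintro rfl; exact ⟨hy0, hpy0⟩
  -- in-degree preservation
  have indeg : ∀ y : V, (Finset.univ.filter (fun x => A x y)).card
      = (Finset.univ.filter (fun u' => B u' (psi y))).card := by
    intro y
    have hout : (Finset.univ.filter (fun z => A y z)).card
        = (Finset.univ.filter (fun z => B (psi y) z)).card := by
      have := Nat.card_congr (Set.BijOn.equiv psi (hpsi.2 y))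
      rwa [card_setOf_eq', card_setOf_eq'] at this
    have hd := hdeg y
    rw [card_setOf_eq', card_setOf_eq'] at hd
    have h1 : (Finset.univ.filter (fun z => A y z ∨ A z y)).card
        = (Finset.univ.filter (fun z => A y z)).card
          + (Finset.univ.filter (fun z => A z y)).card := by
      rw [Finset.filter_or]
      exact Finset.card_union_of_disjoint (by
        simp only [Finset.disjoint_left, Finset.mem_filter, Finset.mem_univ, true_and]
        exact fun z h1 h2 => hA y z h1 h2)
    have h2 : (Finset.univ.filter (fun z => B (psi y) z ∨ B z (psi y))).card
        = (Finset.univ.filter (fun z => B (psi y) z)).card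
          + (Finset.univ.filter (fun z => B z (psi y))).card := by
      rw [Finset.filter_or]
      exact Finset.card_union_of_disjoint (by
        simp only [Finset.disjoint_left, Finset.mem_filter, Finset.mem_univ, true_and]
        exact fun z h1 h2 => hB (psi y) z h1 h2)
    omega
  -- key counting identity
  have key : ∀ w : W,
      ∑ u' ∈ Finset.univ.filter (fun u' => B u' w), (F u').card
        = (F w).card * (Finset.univ.filter (fun u' => B u' w)).card := by
    intro w
    set Nin : Finset W := Finset.univ.filter (fun u' => B u' w) with hNin
    calc ∑ u' ∈ Nin, (F u').card
        = ∑ u' ∈ Nin, ∑ x ∈ F u', ∑ y ∈ F w, (if A x y then 1 else 0) := by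
          refine Finset.sum_congr rfl fun u' hu' => ?_
          have hbu : B u' w := by simpa [hNin] using hu'
          rw [← Finset.sum_attach (F u') (fun x => ∑ y ∈ F w, (if A x y then 1 else 0))]
          have : ∀ x : F u', ∑ y ∈ F w, (if A (x : V) y then 1 else 0) = 1 := by
            intro ⟨x, hx⟩
            have hpx : psi x = u' := by simpa [hF] using hx
            have hb : B (psi x) w := by rw [hpx]; exact hbu
            have hcf : (∑ y ∈ F w, if A (x : V) y then 1 else 0)
                = ((F w).filter (fun y => A x y)).card := (Finset.card_filter _ _).symm
            rw [hcf]
            rw [show (F w).filter (fun y => A x y)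
                = Finset.univ.filter (fun y => A x y ∧ psi y = w) by
              ext y; simp [hF, and_comm]]
            exact out1 x w hb
          simp [this]
      _ = ∑ u' ∈ Nin, ∑ y ∈ F w, ∑ x ∈ F u', (if A x y then 1 else 0) := by
          exact Finset.sum_congr rfl fun u' _ => Finset.sum_comm
      _ = ∑ y ∈ F w, ∑ u' ∈ Nin, ∑ x ∈ F u', (if A x y then 1 else 0) :=
          Finset.sum_comm
      _ = ∑ y ∈ F w, Nin.card := by
          refine Finset.sum_congr rfl fun y hy => ?_
          have hpy : psi y = w := by simpa [hF] using hy
          have hpart : (Finset.univ.filter (fun x => A x y)).card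
              = ∑ u' ∈ Nin, ((Finset.univ.filter (fun x => A x y)).filter
                  (fun x => psi x = u')).card := by
            refine Finset.card_eq_sum_card_fiberwise (f := psi) ?_
            intro x hx
            simp only [Finset.coe_filter, Finset.mem_univ, true_and, Set.mem_setOf_eq] at hx
            have := hpsi.1 hx
            rw [hpy] at this
            simp [hNin, this]
          have hterm : ∀ u' : W, ((Finset.univ.filter (fun x => A x y)).filter
              (fun x => psi x = u')).card = ∑ x ∈ F u', (if A x y then 1 else 0) := by
            intro u'
            rw [← Finset.card_filter]
            congr 1
            ext x
            simp [hF, and_comm]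
          calc ∑ u' ∈ Nin, ∑ x ∈ F u', (if A x y then 1 else 0)
              = ∑ u' ∈ Nin, ((Finset.univ.filter (fun x => A x y)).filter
                  (fun x => psi x = u')).card := by
                exact Finset.sum_congr rfl fun u' _ => (hterm u').symm
            _ = (Finset.univ.filter (fun x => A x y)).card := hpart.symm
            _ = (Finset.univ.filter (fun u' => B u' (psi y))).card := indeg y
            _ = Nin.card := by rw [hpy]
      _ = (F w).card * Nin.card := by
          rw [Finset.sum_const, smul_eq_mul]
  -- minimality + strong connectivity
  obtain ⟨w0, -, hw0⟩ := Finset.exists_min_image Finset.univ (fun w => (F w).card)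
    ⟨u, Finset.mem_univ u⟩
  have hmin : ∀ w : W, (F w).card = (F w0).card := by
    intro w
    induction hsc w w0 using Relation.ReflTransGen.head_induction_on with
    | refl => rfl
    | head hab _ ih =>
      rename_i a c _
      by_contra hne
      have ha : a ∈ Finset.univ.filter (fun u' => B u' c) := by
        simp [hab]
      have hlt : ∑ u' ∈ Finset.univ.filter (fun u' => B u' c), (F w0).card
          < ∑ u' ∈ Finset.univ.filter (fun u' => B u' c), (F u').card := by
        refine Finset.sum_lt_sum (fun i _ => hw0 i (Finset.mem_univ i)) ?_
        exact ⟨a, ha, lt_of_le_of_ne (hw0 a (Finset.mem_univ a)) (Ne.symm hne)⟩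
      rw [key c, ih, Finset.sum_const, smul_eq_mul, mul_comm] at hlt
      exact lt_irrefl _ hlt
  rw [hfib u, hfib v, hmin u, hmin v]
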